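/- Let H be a symmetric d×d real matrix with eigenvalues λ_1 ≤ λ_2 ≤ … ≤ λ_d and unit eigenvector v_1 for λ_1, and let Π = v_1 v_1^T. If λ_1 < 0 < λ_2 and α + β > 1, then the matrix M = (1-α)H + α (I - Π) H (I - Π) - β Π H Π is positive definite. -/

import Mathlib

open Matrix

private lemma posDef_conj {d : ℕ} (D V : Matrix (Fin d) (Fin d) ℝ) (hD : D.PosDef)
    (hVtV : Vᵀ * V = 1) : (Vᵀ * D * V).PosDef := by
  have hherm : (Vᵀ * D * V).IsHermitian := by
    have := isHermitian_conjTranspose_mul_mul (A := D) V hD.isHermitian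
    simpa [conjTranspose_eq_transpose_of_trivial] using this
  refine PosDef.of_dotProduct_mulVec_pos hherm fun x hx => ?_
  have hVx : V *ᵥ x ≠ 0 := by
    intro h
    apply hx
    have : (Vᵀ * V) *ᵥ x = Vᵀ *ᵥ (V *ᵥ x) := by rw [mulVec_mulVec]
    rw [hVtV, one_mulVec, h, mulVec_zero] at this
    exact this
  have := hD.dotProduct_mulVec_pos hVx
  have hrw : star x ⬝ᵥ ((Vᵀ * D * V) *ᵥ x) = star (V *ᵥ x) ⬝ᵥ (D *ᵥ (V *ᵥ x)) := by
    rw [star_trivial, star_trivial, ← mulVec_mulVec, ← mulVec_mulVec, mulVec_transpose,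
      dotProduct_comm, ← dotProduct_mulVec, dotProduct_comm]
  rw [hrw]
  exact this

/-- For a symmetric matrix `H` with orthonormal eigenbasis `v i` and
nondecreasing eigenvalues `μ 0 ≤ μ 1 ≤ …`, with unit eigenvector `v 0` for the
smallest eigenvalue, if `μ 0 < 0 < μ 1` and `α + β > 1`, then
`M = (1-α) H + α (I-P) H (I-P) - β P H P` (where `P = v₀ v₀ᵀ`) is positive definite. -/
theorem stmt2 {d : ℕ} (hd : 2 ≤ d) (H : Matrix (Fin d) (Fin d) ℝ) (hH : H.IsSymm)
    (v : Fin d → (Fin d → ℝ)) (μ : Fin d → ℝ) (hmono : Monotone μ)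
    (horth : ∀ i j, v i ⬝ᵥ v j = if i = j then (1 : ℝ) else 0)
    (heig : ∀ i, H.mulVec (v i) = μ i • v i)
    (hneg : μ ⟨0, by omega⟩ < 0) (hpos : 0 < μ ⟨1, by omega⟩)
    (α β : ℝ) (hab : 1 < α + β) :
    let P : Matrix (Fin d) (Fin d) ℝ := vecMulVec (v ⟨0, by omega⟩) (v ⟨0, by omega⟩)
    ((1 - α) • H + α • ((1 - P) * H * (1 - P)) - β • (P * H * P)).PosDef := by
  intro P
  set i0 : Fin d := ⟨0, by omega⟩ with hi0
  set i1 : Fin d := ⟨1, by omega⟩ with hi1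
  set V : Matrix (Fin d) (Fin d) ℝ := Matrix.of v with hV
  set D : Matrix (Fin d) (Fin d) ℝ := diagonal μ with hD
  set f : Fin d → ℝ := fun i => if i = i0 then 1 else 0 with hf
  set E : Matrix (Fin d) (Fin d) ℝ := diagonal f with hE
  -- orthogonality
  have hVVt : V * Vᵀ = 1 := by
    ext i j
    simp only [hV, mul_apply, transpose_apply, of_apply, one_apply]
    simpa [dotProduct] using horth i j
  have hVtV : Vᵀ * V = 1 := mul_eq_one_comm.mp hVVt
  -- H = Vᵀ D V
  have hHVt : H * Vᵀ = Vᵀ * D := by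
    ext j i
    have := congrFun (heig i) j
    simp only [mulVec, dotProduct, Pi.smul_apply, smul_eq_mul] at this
    simp only [mul_apply, transpose_apply, hV, of_apply, hD, diagonal_apply, mul_ite,
      mul_zero, Finset.sum_ite_eq', Finset.mem_univ, if_true]
    rw [this, mul_comm]
  have hHeq : H = Vᵀ * D * V := by
    calc H = H * (Vᵀ * V) := by rw [hVtV, Matrix.mul_one]
    _ = (H * Vᵀ) * V := by rw [Matrix.mul_assoc]
    _ = Vᵀ * D * V := by rw [hHVt]
  -- P = Vᵀ E V
  have hPeq : P = Vᵀ * E * V := by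
    ext a b
    simp only [P, vecMulVec_apply, mul_apply, transpose_apply, hE, diagonal_apply, hV,
      of_apply, mul_ite, mul_zero, ite_mul, zero_mul, Finset.sum_ite_eq', Finset.mem_univ,
      if_true, hf, mul_one, hi0]
  -- conjugation helper
  have cancel : ∀ A B : Matrix (Fin d) (Fin d) ℝ,
      (Vᵀ * A * V) * (Vᵀ * B * V) = Vᵀ * (A * B) * V := by
    intro A B
    calc (Vᵀ * A * V) * (Vᵀ * B * V) = Vᵀ * A * ((V * Vᵀ) * (B * V)) := by
          simp only [Matrix.mul_assoc]
      _ = Vᵀ * (A * B) * V := by rw [hVVt, Matrix.one_mul]; simp only [Matrix.mul_assoc]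
  have hone : (1 : Matrix (Fin d) (Fin d) ℝ) = Vᵀ * 1 * V := by
    rw [Matrix.mul_one, hVtV]
  have hsub : ∀ A B : Matrix (Fin d) (Fin d) ℝ, Vᵀ * A * V - Vᵀ * B * V = Vᵀ * (A - B) * V := by
    intro A B
    rw [Matrix.mul_sub, Matrix.sub_mul]
  have hadd : ∀ A B : Matrix (Fin d) (Fin d) ℝ, Vᵀ * A * V + Vᵀ * B * V = Vᵀ * (A + B) * V := by
    intro A B
    rw [Matrix.mul_add, Matrix.add_mul]
  have hsmul : ∀ (c : ℝ) (A : Matrix (Fin d) (Fin d) ℝ), c • (Vᵀ * A * V) = Vᵀ * (c • A) * V := by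
    intro c A
    rw [Matrix.mul_smul, Matrix.smul_mul]
  have h1' : (1 : Matrix (Fin d) (Fin d) ℝ) - Vᵀ * E * V = Vᵀ * (1 - E) * V := by
    rw [Matrix.mul_sub, Matrix.sub_mul, Matrix.mul_one, hVtV]
  -- the final diagonal
  set G : Matrix (Fin d) (Fin d) ℝ :=
    (1 - α) • D + α • ((1 - E) * D * (1 - E)) - β • (E * D * E) with hG
  have key : (1 - α) • H + α • ((1 - P) * H * (1 - P)) - β • (P * H * P) = Vᵀ * G * V := by
    rw [hHeq, hPeq, h1', cancel, cancel, cancel, cancel, hsmul, hsmul, hsmul, hadd, hsub, hG]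
  rw [key]
  -- G is a positive diagonal
  have hone' : (1 : Matrix (Fin d) (Fin d) ℝ) - E = diagonal (fun i => 1 - f i) := by
    ext i j
    rcases eq_or_ne i j with h | h
    · subst h; simp [hE, diagonal_apply_eq, Matrix.sub_apply]
    · simp [hE, diagonal_apply_ne _ h, Matrix.sub_apply, Matrix.one_apply_ne h]
  have hGdiag : G = diagonal (fun i =>
      (1 - α) * μ i + α * ((1 - f i) * μ i * (1 - f i)) - β * (f i * μ i * f i)) := by
    rw [hG, hone', hD, hE, diagonal_mul_diagonal, diagonal_mul_diagonal,
      diagonal_mul_diagonal, diagonal_mul_diagonal]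
    ext i j
    rcases eq_or_ne i j with h | h
    · subst h
      simp [diagonal_apply_eq, Matrix.sub_apply, Matrix.add_apply, Matrix.smul_apply]
    · simp [diagonal_apply_ne _ h, Matrix.sub_apply, Matrix.add_apply, Matrix.smul_apply]
  have hGpos : G.PosDef := by
    rw [hGdiag]
    apply Matrix.PosDef.diagonal
    intro i
    by_cases h : i = i0
    · subst h
      simp only [hf, if_pos rfl]
      have : μ i0 < 0 := hneg
      nlinarith
    · simp only [hf, if_neg h]
      have h1i : i1 ≤ i := by
        rw [Fin.le_def]
        have : i.val ≠ 0 := fun hc => h (Fin.ext hc)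
        simp only [hi1]
        omega
      have : 0 < μ i := lt_of_lt_of_le hpos (hmono h1i)
      nlinarith
  exact posDef_conj G V hGpos hVtV
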